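/- For a finitely generated projective R-algebra B, the geometric degree satisfies gdeg_R(B) = max over primes p of Spec R of gdeg_{R_p}(B_p). -/

import Mathlib

open TensorProduct

universe u

/-- `x` satisfies a monic polynomial of degree `n` over `R`. -/
def SatisfiesMonicDeg (R : Type*) {B : Type*} [CommRing R] [Ring B] [Algebra R B]
    (x : B) (n : ℕ) : Prop :=
  ∃ f : Polynomial R, f.Monic ∧ f.natDegree = n ∧ Polynomial.aeval x f = 0

/-- The degree of `x` over `R`. -/
noncomputable def elemDeg (R : Type*) {B : Type*} [CommRing R] [Ring B] [Algebra R B]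
    (x : B) : ℕ :=
  sInf {n | 0 < n ∧ SatisfiesMonicDeg R x n}

/-- The degree of the `R`-algebra `B`. -/
noncomputable def algDeg (R B : Type*) [CommRing R] [Ring B] [Algebra R B] : ℕ :=
  sInf {n | 0 < n ∧ ∀ x : B, SatisfiesMonicDeg R x n}

/-- A bundled commutative `R`-algebra (a base change of `R`). -/
structure RAlg (R : Type u) [CommRing R] : Type (u + 1) where
  carrier : Type u
  [isCommRing : CommRing carrier]
  [isAlgebra : Algebra R carrier]

attribute [instance] RAlg.isCommRing RAlg.isAlgebra

/-- The set of degrees attained by base changes of `B`. -/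
noncomputable def gdegSet (R : Type u) [CommRing R] (B : Type u) [Ring B] [Algebra R B] :
    Set ℕ :=
  {d | ∃ S : RAlg R, algDeg S.carrier (S.carrier ⊗[R] B) = d}

/-- The geometric degree of the `R`-algebra `B`: the supremum of `deg_S(B ⊗_R S)` over all
commutative base changes `R → S`. -/
noncomputable def gdeg (R : Type u) [CommRing R] (B : Type u) [Ring B] [Algebra R B] : ℕ :=
  sSup (gdegSet R B)

/-! ### Auxiliary lemmas -/

set_option maxHeartbeats 1000000
set_option synthInstance.maxHeartbeats 400000

section SatLemmas

variable {S A : Type*} [CommRing S] [Ring A] [Algebra S A]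

theorem sat_succ [Nontrivial S] {x : A} {n : ℕ} (h : SatisfiesMonicDeg S x n) :
    SatisfiesMonicDeg S x (n + 1) := by
  obtain ⟨f, hm, hd, he⟩ := h
  refine ⟨Polynomial.X * f, Polynomial.monic_X.mul hm, ?_, ?_⟩
  · rw [Polynomial.Monic.natDegree_mul Polynomial.monic_X hm, Polynomial.natDegree_X, hd,
      add_comm]
  · rw [map_mul, he, mul_zero]

theorem sat_mono [Nontrivial S] {x : A} {n m : ℕ} (h : SatisfiesMonicDeg S x n) (hnm : n ≤ m) :
    SatisfiesMonicDeg S x m := by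
  induction m, hnm using Nat.le_induction with
  | base => exact h
  | succ m _ ih => exact sat_succ ih

theorem sat_eq_zero_of_subsingleton (hS : Subsingleton S) {x : A} {n : ℕ}
    (h : SatisfiesMonicDeg S x n) : n = 0 := by
  obtain ⟨f, _, hd, _⟩ := h
  haveI := hS
  have hf : f = 0 := Subsingleton.elim _ _
  rw [← hd, hf, Polynomial.natDegree_zero]

theorem algDeg_eq_zero_of_subsingleton (hS : Subsingleton S) : algDeg S A = 0 := by
  have : {n | 0 < n ∧ ∀ x : A, SatisfiesMonicDeg S x n} = ∅ := by
    ext n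
    simp only [Set.mem_setOf_eq, Set.mem_empty_iff_false, iff_false, not_and]
    intro hn hall
    exact absurd (sat_eq_zero_of_subsingleton hS (hall 0)) hn.ne'
  rw [algDeg, this, Nat.sInf_empty]

theorem mem_span_of_sat {x : A} {n : ℕ} (hn : 0 < n) (h : SatisfiesMonicDeg S x n) :
    x ^ n ∈ Submodule.span S (Set.range fun i : Fin n => x ^ (i : ℕ)) := by
  rcases subsingleton_or_nontrivial S with hS | hS
  · exact absurd (sat_eq_zero_of_subsingleton hS h) hn.ne'
  obtain ⟨f, hm, hd, he⟩ := h
  by_cases hfx : f - Polynomial.X ^ n = 0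
  · have hxn : x ^ n = 0 := by
      have hfeq : f = Polynomial.X ^ n := by
        have := sub_eq_zero.mp hfx; exact this
      rw [hfeq] at he
      simpa using he
    rw [hxn]; exact Submodule.zero_mem _
  · have hdeg : (f - Polynomial.X ^ n).degree < (n : WithBot ℕ) := by
      have h1 : f.degree = (Polynomial.X ^ n : Polynomial S).degree := by
        rw [Polynomial.degree_X_pow, Polynomial.degree_eq_natDegree hm.ne_zero, hd]
      have := Polynomial.degree_sub_lt h1 hm.ne_zero
        (by rw [hm.leadingCoeff, Polynomial.leadingCoeff_X_pow])
      rwa [Polynomial.degree_eq_natDegree hm.ne_zero, hd] at this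
    have hnat : (f - Polynomial.X ^ n).natDegree < n := by
      rwa [← Polynomial.natDegree_lt_iff_degree_lt hfx] at hdeg
    have hsum := Polynomial.aeval_eq_sum_range' hnat x
    have hx : x ^ n = -Polynomial.aeval x (f - Polynomial.X ^ n) := by
      rw [map_sub, he, map_pow, Polynomial.aeval_X, zero_sub, neg_neg]
    rw [hx, hsum]
    refine Submodule.neg_mem _ (Submodule.sum_mem _ fun i hi => ?_)
    rw [Finset.mem_range] at hi
    exact Submodule.smul_mem _ _ (Submodule.subset_span ⟨⟨i, hi⟩, rfl⟩)

theorem sat_of_mem_span [Nontrivial S] {x : A} {n : ℕ}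
    (h : x ^ n ∈ Submodule.span S (Set.range fun i : Fin n => x ^ (i : ℕ))) :
    SatisfiesMonicDeg S x n := by
  obtain ⟨c, hc⟩ := (Submodule.mem_span_range_iff_exists_fun _).mp h
  set g : Polynomial S := ∑ i : Fin n, Polynomial.C (c i) * Polynomial.X ^ (i : ℕ) with hg
  have hgdeg : g.degree < (n : WithBot ℕ) := by
    refine lt_of_le_of_lt (Polynomial.degree_sum_le _ _) ?_
    rw [Finset.sup_lt_iff (by exact_mod_cast WithBot.bot_lt_coe n)]
    intro i _
    exact lt_of_le_of_lt (Polynomial.degree_C_mul_X_pow_le _ _) (by exact_mod_cast i.isLt)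
  have hmonic : (Polynomial.X ^ n - g).Monic := Polynomial.monic_X_pow_sub hgdeg
  refine ⟨Polynomial.X ^ n - g, hmonic, ?_, ?_⟩
  · have hdeg : (Polynomial.X ^ n - g).degree = (n : WithBot ℕ) := by
      rw [Polynomial.degree_sub_eq_left_of_degree_lt (by rwa [Polynomial.degree_X_pow]),
        Polynomial.degree_X_pow]
    exact Polynomial.natDegree_eq_of_degree_eq_some hdeg
  · have hag : Polynomial.aeval x g = x ^ n := by
      rw [hg, map_sum, ← hc]
      refine Finset.sum_congr rfl fun i _ => ?_
      rw [map_mul, Polynomial.aeval_C, map_pow, Polynomial.aeval_X, Algebra.smul_def]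
    rw [map_sub, map_pow, Polynomial.aeval_X, hag, sub_self]

theorem sat_congr {A' : Type*} [Ring A'] [Algebra S A'] (e : A ≃ₐ[S] A') {x : A} {n : ℕ}
    (h : SatisfiesMonicDeg S x n) : SatisfiesMonicDeg S (e x) n := by
  obtain ⟨f, hm, hd, he⟩ := h
  exact ⟨f, hm, hd, by rw [Polynomial.aeval_algHom_apply, he, map_zero]⟩

theorem algDeg_congr {A' : Type*} [Ring A'] [Algebra S A'] (e : A ≃ₐ[S] A') :
    algDeg S A = algDeg S A' := by
  unfold algDeg
  congr 1
  ext n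
  simp only [Set.mem_setOf_eq]
  refine and_congr_right fun _ => ⟨fun hs y => ?_, fun hs y => ?_⟩
  · simpa using sat_congr e (hs (e.symm y))
  · simpa using sat_congr e.symm (hs (e y))

/-- Cayley–Hamilton: in an algebra generated as a module by `k` elements, every element
satisfies a monic polynomial of degree `k`. -/
theorem sat_of_gen [Nontrivial S] {k : ℕ} (v : Fin k → A)
    (hv : Submodule.span S (Set.range v) = ⊤) (x : A) : SatisfiesMonicDeg S x k := by
  have hx : ∀ i, ∃ c : Fin k → S, ∑ j, c j • v j = x * v i := fun i =>
    (Submodule.mem_span_range_iff_exists_fun _).mp (hv ▸ Submodule.mem_top)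
  choose c hc using hx
  let bs := Pi.basisFun S (Fin k)
  let φ : (Fin k → S) →ₗ[S] (Fin k → S) := bs.constr S c
  let π : (Fin k → S) →ₗ[S] A := Fintype.linearCombination S v
  have hπ : Function.Surjective π := by
    intro a
    obtain ⟨d, hd⟩ := (Submodule.mem_span_range_iff_exists_fun _).mp (hv ▸ Submodule.mem_top (x := a))
    exact ⟨d, by simpa [π, Fintype.linearCombination_apply] using hd⟩
  have hbase : π.comp φ = (Algebra.lmul S A x).comp π := by
    refine bs.ext fun i => ?_
    have h1 : φ (bs i) = c i := by simp [φ]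
    have h2 : π (bs i) = v i := by
      simp [π, bs, Fintype.linearCombination_apply, Pi.basisFun_apply, Pi.single_apply,
        ite_smul]
    simp only [LinearMap.comp_apply, h1, h2]
    simpa [π, Fintype.linearCombination_apply] using hc i
  have hpow : ∀ m : ℕ, π.comp (φ ^ m : Module.End S (Fin k → S)) =
      (((Algebra.lmul S A x) ^ m : Module.End S A)).comp π := by
    intro m
    induction m with
    | zero => ext w; simp
    | succ m ih =>
      rw [pow_succ, pow_succ]
      calc π.comp ((φ ^ m : Module.End S (Fin k → S)) * φ)
          = (π.comp (φ ^ m : Module.End S (Fin k → S))).comp φ := rfl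
        _ = ((((Algebra.lmul S A x) ^ m : Module.End S A)).comp π).comp φ := by rw [ih]
        _ = (((Algebra.lmul S A x) ^ m : Module.End S A)).comp (π.comp φ) := rfl
        _ = _ := by rw [hbase]; rfl
  have hkey : ∀ p : Polynomial S, π.comp (Polynomial.aeval φ p) =
      (Polynomial.aeval (Algebra.lmul S A x) p).comp π := by
    intro p
    induction p using Polynomial.induction_on' with
    | add p q hp hq =>
      rw [map_add, map_add, LinearMap.comp_add, hp, hq, LinearMap.add_comp]
    | monomial m a =>
      rw [Polynomial.aeval_monomial, Polynomial.aeval_monomial]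
      calc π.comp (algebraMap S _ a * φ ^ m)
          = π.comp (a • (φ ^ m : Module.End S (Fin k → S))) := by
            rw [Algebra.algebraMap_eq_smul_one, smul_mul_assoc, one_mul]
        _ = a • (π.comp (φ ^ m : Module.End S (Fin k → S))) := by
            ext w; simp
        _ = a • ((((Algebra.lmul S A x) ^ m : Module.End S A)).comp π) := by rw [hpow]
        _ = _ := by
            rw [Algebra.algebraMap_eq_smul_one, smul_mul_assoc, one_mul]
            ext w; simp
  have hch := LinearMap.aeval_self_charpoly φ
  have h0 : (Polynomial.aeval (Algebra.lmul S A x) φ.charpoly).comp π = 0 := by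
    rw [← hkey, hch, LinearMap.comp_zero]
  have h0' : Polynomial.aeval (Algebra.lmul S A x) φ.charpoly = 0 := by
    ext a
    obtain ⟨w, rfl⟩ := hπ a
    exact congrFun (congrArg DFunLike.coe h0) w
  refine ⟨φ.charpoly, φ.charpoly_monic, ?_, ?_⟩
  · rw [φ.charpoly_natDegree, Module.finrank_fin_fun]
  · have haeq := Polynomial.aeval_algHom_apply (Algebra.lmul S A) x φ.charpoly
    rw [h0'] at haeq
    have h1 : Algebra.lmul S A (Polynomial.aeval x φ.charpoly) = 0 := haeq.symm
    calc Polynomial.aeval x φ.charpoly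
        = Algebra.lmul S A (Polynomial.aeval x φ.charpoly) 1 := by simp
      _ = 0 := by rw [h1]; rfl

end SatLemmas

theorem span_baseChange {R B : Type*} [CommRing R] [Ring B] [Algebra R B]
    (S : Type*) [CommRing S] [Algebra R S] {k : ℕ} {v : Fin k → B}
    (hv : Submodule.span R (Set.range v) = ⊤) :
    Submodule.span S (Set.range fun i => (1 : S) ⊗ₜ[R] v i) = ⊤ := by
  have h := Submodule.baseChange_span (R := R) (A := S) (Set.range v)
  rw [hv, Submodule.baseChange_top, ← Set.range_comp] at h
  exact h.symm

/-- The algebra version of `AlgebraTensorModule.cancelBaseChange`, valid for a possibly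
noncommutative `B`. -/
noncomputable def cancelAlgEquiv (R S T B : Type*) [CommRing R] [CommRing S] [CommRing T]
    [Ring B] [Algebra R S] [Algebra R B] [Algebra S T] [Algebra R T] [IsScalarTower R S T] :
    T ⊗[S] (S ⊗[R] B) ≃ₐ[T] T ⊗[R] B := by
  letI l := AlgebraTensorModule.cancelBaseChange R S T T B
  refine AlgEquiv.ofLinearEquiv l ?_ ?_
  · show l ((1:T) ⊗ₜ[S] ((1:S) ⊗ₜ[R] (1:B))) = (1:T) ⊗ₜ[R] (1:B)
    rw [AlgebraTensorModule.cancelBaseChange_tmul, one_smul]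
  · intro x y
    induction x using TensorProduct.induction_on with
    | zero => rw [zero_mul, map_zero, zero_mul]
    | add a b ha hb => rw [add_mul, map_add, map_add, add_mul, ha, hb]
    | tmul t z =>
      induction z using TensorProduct.induction_on with
      | zero => rw [TensorProduct.tmul_zero, zero_mul, map_zero, zero_mul]
      | add z1 z2 h1 h2 =>
        rw [TensorProduct.tmul_add, add_mul, map_add, map_add, add_mul, h1, h2]
      | tmul s b =>
        induction y using TensorProduct.induction_on with
        | zero => rw [mul_zero, map_zero, mul_zero]
        | add a b ha hb => rw [mul_add, map_add, map_add, mul_add, ha, hb]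
        | tmul t' z' =>
          induction z' using TensorProduct.induction_on with
          | zero => rw [TensorProduct.tmul_zero, mul_zero, map_zero, mul_zero]
          | add z1 z2 h1 h2 =>
            rw [TensorProduct.tmul_add, mul_add, map_add, map_add, mul_add, h1, h2]
          | tmul s' b' =>
            show l (((t ⊗ₜ[S] (s ⊗ₜ[R] b))) * ((t' ⊗ₜ[S] (s' ⊗ₜ[R] b')))) = _
            rw [Algebra.TensorProduct.tmul_mul_tmul, Algebra.TensorProduct.tmul_mul_tmul]
            show l ((t * t') ⊗ₜ[S] ((s * s') ⊗ₜ[R] (b * b'))) =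
              l (t ⊗ₜ[S] (s ⊗ₜ[R] b)) * l (t' ⊗ₜ[S] (s' ⊗ₜ[R] b'))
            rw [AlgebraTensorModule.cancelBaseChange_tmul,
              AlgebraTensorModule.cancelBaseChange_tmul,
              AlgebraTensorModule.cancelBaseChange_tmul,
              Algebra.TensorProduct.tmul_mul_tmul, smul_mul_smul_comm, mul_smul]

/-- The geometric degree of a finitely generated projective `R`-algebra `B` is the maximum,
over the primes `p` of `R`, of the geometric degree of `B_p` over `R_p`: each local geometric
degree is at most `gdeg_R(B)`, and some prime attains it. -/
theorem stmt10 (R B : Type) [CommRing R] [IsNoetherianRing R] [Nontrivial R]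
    [Ring B] [Algebra R B] [Module.Finite R B] [Module.Projective R B] :
    (∀ (p : Ideal R) (hp : p.IsPrime),
      haveI := hp
      gdeg (Localization.AtPrime p) ((Localization.AtPrime p) ⊗[R] B) ≤ gdeg R B) ∧
    (∃ (p : Ideal R) (hp : p.IsPrime),
      haveI := hp
      gdeg (Localization.AtPrime p) ((Localization.AtPrime p) ⊗[R] B) = gdeg R B) := by
  classical
  obtain ⟨k, v, hv⟩ := Module.Finite.exists_fin (R := R) (M := B)
  set K := max k 1 with hKdef
  have hKpos : 0 < K := lt_of_lt_of_le one_pos (le_max_right k 1)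
  -- every member of `gdegSet R B` is at most `K`
  have hbound : ∀ d ∈ gdegSet R B, d ≤ K := by
    rintro d ⟨S, rfl⟩
    rcases subsingleton_or_nontrivial S.carrier with hS | hS
    · rw [algDeg_eq_zero_of_subsingleton hS]; exact Nat.zero_le _
    · exact Nat.sInf_le ⟨hKpos, fun x =>
        sat_mono (sat_of_gen _ (span_baseChange S.carrier hv) x) (le_max_left _ _)⟩
  have hbdd : BddAbove (gdegSet R B) := ⟨K, fun d hd => hbound d hd⟩
  have hRmem : algDeg R B ∈ gdegSet R B :=
    ⟨⟨R⟩, algDeg_congr (Algebra.TensorProduct.lid R B)⟩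
  have hne : (gdegSet R B).Nonempty := ⟨_, hRmem⟩
  have halg_pos : 0 < algDeg R B := by
    have hKset : K ∈ {n | 0 < n ∧ ∀ x : B, SatisfiesMonicDeg R x n} :=
      ⟨hKpos, fun x => sat_mono (sat_of_gen v hv x) (le_max_left _ _)⟩
    exact (Nat.sInf_mem (⟨K, hKset⟩ : Set.Nonempty _)).1
  have hd_pos : 0 < gdeg R B := lt_of_lt_of_le halg_pos (le_csSup hbdd hRmem)
  -- the inclusion of local degree sets into the global one
  have hsub : ∀ (p : Ideal R) (hp : p.IsPrime),
      haveI := hp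
      gdegSet (Localization.AtPrime p) (Localization.AtPrime p ⊗[R] B) ⊆ gdegSet R B := by
    intro p hp e he
    haveI := hp
    obtain ⟨S', hS'⟩ := he
    letI : Algebra R S'.carrier :=
      ((algebraMap (Localization.AtPrime p) S'.carrier).comp
        (algebraMap R (Localization.AtPrime p))).toAlgebra
    haveI : IsScalarTower R (Localization.AtPrime p) S'.carrier :=
      IsScalarTower.of_algebraMap_eq' rfl
    refine ⟨⟨S'.carrier⟩, ?_⟩
    rw [← hS']
    exact (algDeg_congr (cancelAlgEquiv R (Localization.AtPrime p) S'.carrier B)).symm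
  have hlocne : ∀ (p : Ideal R) (hp : p.IsPrime),
      haveI := hp
      algDeg (Localization.AtPrime p)
          ((Localization.AtPrime p) ⊗[Localization.AtPrime p] ((Localization.AtPrime p) ⊗[R] B))
        ∈ gdegSet (Localization.AtPrime p) (Localization.AtPrime p ⊗[R] B) := by
    intro p hp
    haveI := hp
    exact ⟨⟨Localization.AtPrime p⟩, rfl⟩
  have hle : ∀ (p : Ideal R) (hp : p.IsPrime),
      haveI := hp
      gdeg (Localization.AtPrime p) ((Localization.AtPrime p) ⊗[R] B) ≤ gdeg R B := by
    intro p hp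
    haveI := hp
    exact csSup_le ⟨_, hlocne p hp⟩ fun e he => le_csSup hbdd (hsub p hp he)
  refine ⟨hle, ?_⟩
  -- attainment
  obtain ⟨S, hS⟩ := Nat.sSup_mem hne hbdd
  rcases eq_or_lt_of_le (Nat.one_le_iff_ne_zero.mpr hd_pos.ne') with hd1 | hd2
  · -- gdeg R B = 1 : any prime works
    obtain ⟨p, hpmax⟩ := Ideal.exists_maximal R
    haveI hp : p.IsPrime := hpmax.isPrime
    refine ⟨p, hp, le_antisymm (hle p hp) ?_⟩
    have hbddp : BddAbove (gdegSet (Localization.AtPrime p) (Localization.AtPrime p ⊗[R] B)) :=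
      ⟨K, fun e he => hbound e (hsub p hp he)⟩
    have hposloc : 0 < algDeg (Localization.AtPrime p)
        ((Localization.AtPrime p) ⊗[Localization.AtPrime p] ((Localization.AtPrime p) ⊗[R] B)) := by
      rw [algDeg_congr (Algebra.TensorProduct.lid (Localization.AtPrime p)
        ((Localization.AtPrime p) ⊗[R] B))]
      have hKset : K ∈ {n | 0 < n ∧ ∀ x : (Localization.AtPrime p) ⊗[R] B,
          SatisfiesMonicDeg (Localization.AtPrime p) x n} :=
        ⟨hKpos, fun x => sat_mono
          (sat_of_gen _ (span_baseChange (Localization.AtPrime p) hv) x) (le_max_left _ _)⟩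
      exact (Nat.sInf_mem (⟨K, hKset⟩ : Set.Nonempty _)).1
    calc gdeg R B = 1 := hd1.symm
      _ ≤ algDeg (Localization.AtPrime p)
          ((Localization.AtPrime p) ⊗[Localization.AtPrime p] ((Localization.AtPrime p) ⊗[R] B)) :=
          hposloc
      _ ≤ gdeg (Localization.AtPrime p) ((Localization.AtPrime p) ⊗[R] B) :=
          le_csSup hbddp (hlocne p hp)
  · -- main case : gdeg R B ≥ 2
    replace hS : algDeg S.carrier (S.carrier ⊗[R] B) = gdeg R B := hS
    set m := gdeg R B - 1 with hmdef
    have hm : 0 < m := by omega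
    have hmd : m + 1 = gdeg R B := by omega
    haveI hSnt : Nontrivial S.carrier := by
      rcases subsingleton_or_nontrivial S.carrier with h | h
      · exfalso
        rw [algDeg_eq_zero_of_subsingleton h] at hS
        omega
      · exact h
    have hAgens := span_baseChange S.carrier hv
    have hm_not : m ∉ {n | 0 < n ∧ ∀ x : S.carrier ⊗[R] B,
        SatisfiesMonicDeg S.carrier x n} := by
      apply Nat.notMem_of_lt_sInf
      rw [show sInf _ = algDeg S.carrier (S.carrier ⊗[R] B) from rfl, hS]
      omega
    obtain ⟨x, hx⟩ : ∃ x : S.carrier ⊗[R] B, ¬ SatisfiesMonicDeg S.carrier x m := by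
      by_contra hcon
      push_neg at hcon
      exact hm_not ⟨hm, hcon⟩
    have hxspan : x ^ m ∉ Submodule.span S.carrier
        (Set.range fun i : Fin m => x ^ (i : ℕ)) :=
      fun hmem => hx (sat_of_mem_span hmem)
    set N := Submodule.span S.carrier (Set.range fun i : Fin m => x ^ (i : ℕ)) with hNdef
    set I : Ideal S.carrier :=
      N.comap (LinearMap.toSpanSingleton S.carrier (S.carrier ⊗[R] B) (x ^ m)) with hIdef
    have hI : I ≠ ⊤ := by
      intro htop
      apply hxspan
      have h1 : (1 : S.carrier) ∈ I := htop ▸ Submodule.mem_top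
      simpa [hIdef, Submodule.mem_comap, LinearMap.toSpanSingleton_apply] using h1
    obtain ⟨q, hqmax, hIq⟩ := Ideal.exists_le_maximal I hI
    haveI hq : q.IsPrime := hqmax.isPrime
    set p := q.comap (algebraMap R S.carrier) with hpdef
    haveI hp : p.IsPrime := Ideal.IsPrime.comap _
    refine ⟨p, hp, le_antisymm (hle p hp) ?_⟩
    set T := Localization.AtPrime q with hTdef
    haveI hRST : IsScalarTower R S.carrier T := inferInstance
    letI : Algebra (Localization.AtPrime p) T :=
      (Localization.localRingHom p q (algebraMap R S.carrier) rfl).toAlgebra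
    haveI : IsScalarTower R (Localization.AtPrime p) T := by
      refine IsScalarTower.of_algebraMap_eq fun r => ?_
      rw [IsScalarTower.algebraMap_apply R S.carrier T]
      exact (Localization.localRingHom_to_map p q (algebraMap R S.carrier) rfl r).symm
    letI f : (S.carrier ⊗[R] B) →ₗ[S.carrier] T ⊗[S.carrier] (S.carrier ⊗[R] B) :=
      TensorProduct.mk S.carrier T (S.carrier ⊗[R] B) 1
    haveI hloc : IsLocalizedModule q.primeCompl f :=
      (isLocalizedModule_iff_isBaseChange q.primeCompl T f).mpr
        (TensorProduct.isBaseChange S.carrier (S.carrier ⊗[R] B) T)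
    -- the localized element does not satisfy a monic polynomial of degree `m`
    have hxT : ¬ SatisfiesMonicDeg T ((1 : T) ⊗ₜ[S.carrier] x) m := by
      intro hsat
      have hmemT := mem_span_of_sat hm hsat
      have hpowT : ∀ j : ℕ, ((1 : T) ⊗ₜ[S.carrier] x) ^ j = f (x ^ j) := fun j => by
        rw [Algebra.TensorProduct.tmul_pow, one_pow]; rfl
      simp only [hpowT] at hmemT
      obtain ⟨c, hc⟩ := (Submodule.mem_span_range_iff_exists_fun _).mp hmemT
      obtain ⟨b, hb⟩ := IsLocalization.exist_integer_multiples q.primeCompl Finset.univ c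
      choose a ha using fun i => hb i (Finset.mem_univ i)
      have h1 : f ((b : S.carrier) • x ^ m - ∑ i : Fin m, a i • x ^ (i : ℕ)) = 0 := by
        rw [map_sub, map_smul, map_sum, ← hc, Finset.smul_sum, sub_eq_zero]
        refine Finset.sum_congr rfl fun i _ => ?_
        calc (b : S.carrier) • c i • f (x ^ (i : ℕ))
            = ((b : S.carrier) • c i) • f (x ^ (i : ℕ)) := (smul_assoc _ _ _).symm
          _ = (algebraMap S.carrier T (a i)) • f (x ^ (i : ℕ)) := by
              rw [ha i]
          _ = a i • f (x ^ (i : ℕ)) := algebraMap_smul _ _ _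
          _ = f (a i • x ^ (i : ℕ)) := (map_smul f _ _).symm
      obtain ⟨s', hs'⟩ := (IsLocalizedModule.eq_zero_iff q.primeCompl f).mp h1
      rw [smul_sub, sub_eq_zero] at hs'
      have hs'' : (s' : S.carrier) • ((b : S.carrier) • x ^ m)
          = (s' : S.carrier) • (∑ i : Fin m, a i • x ^ (i : ℕ)) := by
        simpa [Submonoid.smul_def] using hs'
      have hmemN : ((s' : S.carrier) * (b : S.carrier)) • x ^ m ∈ N := by
        rw [mul_smul, hs'']
        exact Submodule.smul_mem _ _ (Submodule.sum_mem _ fun i _ =>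
          Submodule.smul_mem _ _ (Submodule.subset_span ⟨i, rfl⟩))
      have hmemI : (s' : S.carrier) * (b : S.carrier) ∈ I := by
        rw [hIdef]
        simpa [Submodule.mem_comap, LinearMap.toSpanSingleton_apply] using hmemN
      exact (q.primeCompl.mul_mem s'.2 b.2) (hIq hmemI)
    -- assemble
    have hbddp : BddAbove (gdegSet (Localization.AtPrime p) (Localization.AtPrime p ⊗[R] B)) :=
      ⟨K, fun e he => hbound e (hsub p hp he)⟩
    have hTgens := span_baseChange T hAgens
    have hge : gdeg R B ≤ algDeg T (T ⊗[S.carrier] (S.carrier ⊗[R] B)) := by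
      have hKT : K ∈ {n | 0 < n ∧ ∀ y : T ⊗[S.carrier] (S.carrier ⊗[R] B),
          SatisfiesMonicDeg T y n} :=
        ⟨hKpos, fun y => sat_mono (sat_of_gen _ hTgens y) (le_max_left _ _)⟩
      have hmem := Nat.sInf_mem (⟨K, hKT⟩ : Set.Nonempty _)
      by_contra hlt
      push_neg at hlt
      rw [show algDeg T (T ⊗[S.carrier] (S.carrier ⊗[R] B)) = sInf {n | 0 < n ∧
        ∀ y : T ⊗[S.carrier] (S.carrier ⊗[R] B), SatisfiesMonicDeg T y n} from rfl] at hlt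
      obtain ⟨hn0, hall⟩ := hmem
      exact hxT (sat_mono (hall _) (by omega))
    have hval2 : algDeg T (T ⊗[S.carrier] (S.carrier ⊗[R] B)) = algDeg T (T ⊗[R] B) :=
      algDeg_congr (cancelAlgEquiv R S.carrier T B)
    have hval1 : algDeg T (T ⊗[Localization.AtPrime p] ((Localization.AtPrime p) ⊗[R] B))
        = algDeg T (T ⊗[R] B) :=
      algDeg_congr (cancelAlgEquiv R (Localization.AtPrime p) T B)
    have hTle : algDeg T (T ⊗[R] B) ≤ gdeg R B := le_csSup hbdd ⟨⟨T⟩, rfl⟩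
    have hTeq : algDeg T (T ⊗[R] B) = gdeg R B :=
      le_antisymm hTle (le_trans hge (le_of_eq hval2))
    have hmemp : gdeg R B ∈ gdegSet (Localization.AtPrime p) (Localization.AtPrime p ⊗[R] B) :=
      ⟨⟨T⟩, by rw [hval1, hTeq]⟩
    exact le_csSup hbddp hmemp
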